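/- With the setup of the diagonal Weierstrass form spectrum theorem: if $w \neq 0$ satisfies $(\tau_\alpha I - A)w = \lambda(\tau_\alpha I - \tilde{A})w$ for some index $\alpha \le n^{(0)}$, then there exists a nonzero vector $v \in \mathbb{C}^{n+1}$ such that $T(v \otimes w) = \lambda \tilde{T}(v \otimes w)$, where $T = T^{(0)}\otimes I - T^{(1)}\otimes A$ and $\tilde{T} = T^{(0)}\otimes I - T^{(1)}\otimes \tilde{A}$; indeed $v = Ve_\alpha$ works, where $V$ is the right Weierstrass transformation and $e_\alpha$ the $\alpha$-th unit vector. -/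
import Mathlib


open Matrix Kronecker


private lemma kron_mulVec {a b c d : Type*} [Fintype b] [Fintype d]
    (M : Matrix a b ℂ) (N : Matrix c d ℂ) (v : b → ℂ) (w : d → ℂ) :
    (M ⊗ₖ N).mulVec (fun p => v p.1 * w p.2)
      = fun p => M.mulVec v p.1 * N.mulVec w p.2 := by
  funext p
  simp only [Matrix.mulVec, dotProduct, kroneckerMap_apply, Fintype.sum_prod_type,
    Finset.sum_mul, Finset.mul_sum]
  rw [Finset.sum_comm]
  exact Finset.sum_congr rfl fun l _ => Finset.sum_congr rfl fun j _ => by ring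

/-- Theorem 4.4 (iii): an eigenvector `w` of the pencil
`(τ_α I - A) - z(τ_α I - Ã)` lifts to an eigenvector `v ⊗ w` of the pencil
`T - zT̃`; indeed `v = V e_α` works. -/
theorem pencil_eigenvector_lift_diag_weierstrass
    (n m n0 n1 : ℕ) (hn : n0 + n1 = n + 1) (τ : Fin n0 → ℂ)
    (T0 T1 U V : Matrix (Fin (n + 1)) (Fin (n + 1)) ℂ)
    (hU : IsUnit U.det) (hV : IsUnit V.det)
    (hW0 : U * T0 * V =
      Matrix.reindex (finSumFinEquiv.trans (finCongr hn))
        (finSumFinEquiv.trans (finCongr hn))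
        (Matrix.fromBlocks (Matrix.diagonal τ) 0 0 1))
    (hW1 : U * T1 * V =
      Matrix.reindex (finSumFinEquiv.trans (finCongr hn))
        (finSumFinEquiv.trans (finCongr hn))
        (Matrix.fromBlocks 1 0 0 0))
    (A At : Matrix (Fin m) (Fin m) ℂ)
    (w : Fin m → ℂ) (hw : w ≠ 0) (α : Fin n0) (lam : ℂ)
    (hew : (τ α • (1 : Matrix (Fin m) (Fin m) ℂ) - A).mulVec w
      = lam • (τ α • (1 : Matrix (Fin m) (Fin m) ℂ) - At).mulVec w) :
    ∃ v : Fin (n + 1) → ℂ,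
      v = V.mulVec
        (Pi.single ((finSumFinEquiv.trans (finCongr hn)) (Sum.inl α)) 1) ∧
      v ≠ 0 ∧
      (T0 ⊗ₖ (1 : Matrix (Fin m) (Fin m) ℂ) - T1 ⊗ₖ A).mulVec
          (fun p : Fin (n + 1) × Fin m => v p.1 * w p.2)
        = lam • (T0 ⊗ₖ (1 : Matrix (Fin m) (Fin m) ℂ) - T1 ⊗ₖ At).mulVec
            (fun p : Fin (n + 1) × Fin m => v p.1 * w p.2) := by
  set κ := finSumFinEquiv.trans (finCongr hn) with hκ
  set e : Fin (n+1) → ℂ := Pi.single (κ (Sum.inl α)) 1 with he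
  set v := V.mulVec e with hv
  have hVinv : Invertible V := V.invertibleOfIsUnitDet hV
  have hUinv : Invertible U := U.invertibleOfIsUnitDet hU
  have hvne : v ≠ 0 := by
    intro h
    have h0 : V.mulVec e = V.mulVec 0 := by rw [Matrix.mulVec_zero, ← h, hv]
    have h2 := Matrix.mulVec_injective_of_invertible V h0
    have h1 := congrFun h2 (κ (Sum.inl α))
    simp [he] at h1
  -- column computations
  have hcol : ∀ (B : Matrix (Fin n0 ⊕ Fin n1) (Fin n0 ⊕ Fin n1) ℂ),
      ((Matrix.reindex κ κ B).mulVec e) = fun i => B (κ.symm i) (Sum.inl α) := by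
    intro B
    funext i
    simp only [Matrix.reindex_apply, he]
    rw [show (Matrix.submatrix B ⇑κ.symm ⇑κ.symm) = Matrix.submatrix B ⇑κ.symm ⇑(κ.symm : _ ≃ _) from rfl,
      Matrix.submatrix_mulVec_equiv]
    have hs : (Pi.single (κ (Sum.inl α)) (1:ℂ)) ∘ ⇑κ = Pi.single (Sum.inl α) 1 := by
      funext j
      simp [Pi.single_apply, Equiv.apply_eq_iff_eq]
    simp only [Equiv.symm_symm, hs, Function.comp_apply]
    simp [Matrix.mulVec_single]
  have hT1 : U.mulVec (T1.mulVec v) = e := by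
    rw [hv, Matrix.mulVec_mulVec, Matrix.mulVec_mulVec, hW1, hcol]
    funext i
    rcases h : κ.symm i with j | j
    · have : i = κ (Sum.inl j) := by rw [← h]; simp
      subst this
      simp [he, Matrix.fromBlocks_apply₁₁, Matrix.one_apply, Pi.single_apply,
        Equiv.apply_eq_iff_eq, Sum.inl.injEq, eq_comm]
    · have : i = κ (Sum.inr j) := by rw [← h]; simp
      subst this
      simp [he, Pi.single_apply, Equiv.apply_eq_iff_eq]
  have hT0 : U.mulVec (T0.mulVec v) = τ α • e := by
    rw [hv, Matrix.mulVec_mulVec, Matrix.mulVec_mulVec, hW0, hcol]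
    funext i
    rcases h : κ.symm i with j | j
    · have : i = κ (Sum.inl j) := by rw [← h]; simp
      subst this
      simp [he, Matrix.diagonal_apply, Pi.single_apply,
        Equiv.apply_eq_iff_eq, Sum.inl.injEq, eq_comm]
      split_ifs with h' <;> simp [h']
    · have : i = κ (Sum.inr j) := by rw [← h]; simp
      subst this
      simp [he, Pi.single_apply, Equiv.apply_eq_iff_eq]
  have hkey : T0.mulVec v = τ α • T1.mulVec v := by
    apply Matrix.mulVec_injective_of_invertible U
    rw [hT0, Matrix.mulVec_smul, hT1]
  refine ⟨v, rfl, hvne, ?_⟩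
  have hew' : ∀ k, τ α * w k - A.mulVec w k
      = lam * (τ α * w k - At.mulVec w k) := by
    intro k
    have := congrFun hew k
    simpa [Matrix.sub_mulVec, Matrix.smul_mulVec] using this
  funext p
  simp only [Matrix.sub_mulVec, kron_mulVec, Pi.sub_apply, Pi.smul_apply, smul_eq_mul,
    Matrix.one_mulVec]
  rw [hkey]
  simp only [Pi.smul_apply, smul_eq_mul]
  have := hew' p.2
  calc τ α * T1.mulVec v p.1 * w p.2 - T1.mulVec v p.1 * A.mulVec w p.2
      = T1.mulVec v p.1 * (τ α * w p.2 - A.mulVec w p.2) := by ring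
    _ = T1.mulVec v p.1 * (lam * (τ α * w p.2 - At.mulVec w p.2)) := by rw [this]
    _ = lam * (τ α * T1.mulVec v p.1 * w p.2 - T1.mulVec v p.1 * At.mulVec w p.2) := by ring
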